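/- Let X be a Banach space, β a countable ordinal, N a linear subspace of X*, and (g_n)_{n≥1} a bounded sequence in X** such that for every ordinal γ < β and every weak*-convergent sequence (x*_m) of elements of the weak* sequential closure N_(γ) with weak* limit x*, one has g_n(x*) = lim_{m→∞} g_n(x*_m) for every n. Let (s*_n) ⊆ X* with ‖s*_n‖ ≤ 1, let ν_n > 0 with Σ_{n=1}^∞ ν_n < 1/(2 sup_n ‖g_n‖), and let R : X* → X* be the isomorphism R(x*) = x* + Σ_{n=1}^∞ ν_n g_n(x*) s*_n. Then for every ordinal γ ≤ β, the weak* sequential closure of order γ of K = R(N) satisfies K_(γ) = R(N_(γ)). -/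

import Mathlib

open MeasureTheory Filter Topology Set NormedSpace

set_option synthInstance.maxHeartbeats 1000000
set_option maxHeartbeats 1000000

noncomputable section

/-- The weak* sequential closure (of order one) of a set of functionals: all limits of
weak*-convergent (i.e. pointwise convergent) sequences from `V`. -/
def wsclOne {X : Type*} [NormedAddCommGroup X] [NormedSpace ℝ X]
    (V : Set (StrongDual ℝ X)) : Set (StrongDual ℝ X) :=
  {f | ∃ g : ℕ → StrongDual ℝ X, (∀ n, g n ∈ V) ∧ ∀ x, Tendsto (fun n => g n x) atTop (𝓝 (f x))}

/-- The weak* sequential closure of order `α`: `V_(0) = V` and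
`V_(α) = ⋃_{β<α} (V_(β))_(1)` for `α > 0`. -/
def wscl {X : Type*} [NormedAddCommGroup X] [NormedSpace ℝ X]
    (V : Set (StrongDual ℝ X)) (α : Ordinal) : Set (StrongDual ℝ X) :=
  if α = 0 then V
  else ⋃ (β : Ordinal), ⋃ (_ : β < α), wsclOne (wscl V β)
termination_by α

lemma wscl_zero {X : Type*} [NormedAddCommGroup X] [NormedSpace ℝ X]
    (V : Set (StrongDual ℝ X)) : wscl V 0 = V := by
  rw [wscl]; simp

lemma wscl_ne_zero {X : Type*} [NormedAddCommGroup X] [NormedSpace ℝ X]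
    (V : Set (StrongDual ℝ X)) {α : Ordinal} (h : α ≠ 0) :
    wscl V α = ⋃ (β : Ordinal), ⋃ (_ : β < α), wsclOne (wscl V β) := by
  rw [wscl]; simp [h]

/-- If `(g_n) ⊆ X**` is bounded and weak*-sequentially continuous on the closures `N_(γ)`
for `γ < β`, and `R(x*) = x* + Σ_n ν_n g_n(x*) s_n` is the corresponding isomorphism of
`X*`, then the weak* sequential closures of `K = R(N)` satisfy `K_(γ) = R(N_(γ))` for all
`γ ≤ β`. -/
theorem wscl_of_image_under_R {X : Type*} [NormedAddCommGroup X] [NormedSpace ℝ X]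
    [CompleteSpace X]
    (β : Ordinal) (hβ : β.card ≤ Cardinal.aleph0)
    (N : Submodule ℝ (StrongDual ℝ X))
    (g : ℕ → StrongDual ℝ (StrongDual ℝ X)) (hgbdd : BddAbove (Set.range fun n => ‖g n‖))
    (hcont : ∀ γ < β, ∀ xs : ℕ → StrongDual ℝ X,
      (∀ m, xs m ∈ wscl (N : Set (StrongDual ℝ X)) γ) →
      ∀ x0 : StrongDual ℝ X, (∀ x : X, Tendsto (fun m => xs m x) atTop (𝓝 (x0 x))) →
      ∀ n, Tendsto (fun m => g n (xs m)) atTop (𝓝 (g n x0)))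
    (s : ℕ → StrongDual ℝ X) (hs : ∀ n, ‖s n‖ ≤ 1)
    (ν : ℕ → ℝ) (hν : ∀ n, 0 < ν n) (hνsum : Summable ν)
    (hνlt : ∑' n, ν n < 1 / (2 * ⨆ n, ‖g n‖))
    (R : StrongDual ℝ X →L[ℝ] StrongDual ℝ X)
    (hR : ∀ xs : StrongDual ℝ X, HasSum (fun n => (ν n * g n xs) • s n) (R xs - xs)) :
    ∀ γ ≤ β, wscl (⇑R '' (N : Set (StrongDual ℝ X))) γ = ⇑R '' wscl (N : Set (StrongDual ℝ X)) γ := by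
  classical
  set M := ⨆ n, ‖g n‖ with hMdef
  have hgM : ∀ n, ‖g n‖ ≤ M := fun n => le_ciSup hgbdd n
  have hM0 : (0:ℝ) ≤ M := (norm_nonneg (g 0)).trans (hgM 0)
  have hνpos : 0 < ∑' n, ν n := Summable.tsum_pos hνsum (fun n => (hν n).le) 0 (hν 0)
  have hMpos : 0 < M := by
    rcases hM0.lt_or_eq with h | h
    · exact h
    · exfalso; rw [← h] at hνlt; norm_num at hνlt; linarith
  have hhalf : M * ∑' n, ν n < 1/2 := by
    have h1 := mul_lt_mul_of_pos_left hνlt hMpos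
    have h2 : M * (1 / (2 * M)) = 1/2 := by field_simp
    linarith
  -- pointwise absolute bound on the summands
  have habs : ∀ (h : StrongDual ℝ X) (C : ℝ), ‖h‖ ≤ C → ∀ (n : ℕ) (x : X),
      |(ν n * g n h) * s n x| ≤ ν n * (M * C * ‖x‖) := by
    intro h C hC n x
    have hC0 : (0:ℝ) ≤ C := (norm_nonneg h).trans hC
    have h1 : |g n h| ≤ M * C := by
      calc |g n h| = ‖g n h‖ := (Real.norm_eq_abs _).symm
        _ ≤ ‖g n‖ * ‖h‖ := (g n).le_opNorm h
        _ ≤ M * C := mul_le_mul (hgM n) hC (norm_nonneg _) hM0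
    have h2 : |s n x| ≤ ‖x‖ := by
      calc |s n x| = ‖s n x‖ := (Real.norm_eq_abs _).symm
        _ ≤ ‖s n‖ * ‖x‖ := (s n).le_opNorm x
        _ ≤ 1 * ‖x‖ := mul_le_mul_of_nonneg_right (hs n) (norm_nonneg x)
        _ = ‖x‖ := one_mul _
    calc |(ν n * g n h) * s n x| = ν n * |g n h| * |s n x| := by
          rw [abs_mul, abs_mul, abs_of_pos (hν n)]
      _ ≤ ν n * (M * C) * ‖x‖ :=
          mul_le_mul (mul_le_mul_of_nonneg_left h1 (hν n).le) h2 (abs_nonneg _)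
            (mul_nonneg (hν n).le (mul_nonneg hM0 hC0))
      _ = ν n * (M * C * ‖x‖) := by ring
  -- norm bound on the summands
  have hsmul : ∀ (h : StrongDual ℝ X) (n : ℕ), ‖(ν n * g n h) • s n‖ ≤ ν n * (M * ‖h‖) := by
    intro h n
    rw [norm_smul]
    have h1 : ‖ν n * g n h‖ ≤ ν n * (M * ‖h‖) := by
      rw [Real.norm_eq_abs, abs_mul, abs_of_pos (hν n)]
      refine mul_le_mul_of_nonneg_left ?_ (hν n).le
      calc |g n h| = ‖g n h‖ := (Real.norm_eq_abs _).symm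
        _ ≤ ‖g n‖ * ‖h‖ := (g n).le_opNorm h
        _ ≤ M * ‖h‖ := mul_le_mul_of_nonneg_right (hgM n) (norm_nonneg _)
    calc ‖ν n * g n h‖ * ‖s n‖ ≤ ‖ν n * g n h‖ * 1 :=
          mul_le_mul_of_nonneg_left (hs n) (norm_nonneg _)
      _ = ‖ν n * g n h‖ := mul_one _
      _ ≤ ν n * (M * ‖h‖) := h1
  -- R is bounded below: ‖h‖ ≤ 2 ‖R h‖
  have hnorm : ∀ h : StrongDual ℝ X, ‖h‖ ≤ 2 * ‖R h‖ := by
    intro h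
    have hb : ‖R h - h‖ ≤ (∑' n, ν n) * (M * ‖h‖) := by
      rw [← (hR h).tsum_eq]
      exact tsum_of_norm_bounded (hνsum.hasSum.mul_right (M * ‖h‖)) (hsmul h)
    have h1 : ‖h‖ ≤ ‖R h‖ + ‖R h - h‖ := by
      have := norm_sub_norm_le (R h) h
      have := norm_sub_le (R h) (R h - h)
      have : h = R h - (R h - h) := by abel
      calc ‖h‖ = ‖R h - (R h - h)‖ := by rw [← this]
        _ ≤ ‖R h‖ + ‖R h - h‖ := norm_sub_le _ _
    have h2 : (∑' n, ν n) * (M * ‖h‖) ≤ (1/2) * ‖h‖ := by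
      have := mul_le_mul_of_nonneg_right hhalf.le (norm_nonneg h)
      nlinarith [norm_nonneg h]
    linarith
  -- evaluation of the defining sum of R at a point
  have hRx : ∀ (h : StrongDual ℝ X) (x : X),
      HasSum (fun n => (ν n * g n h) * s n x) (R h x - h x) := by
    intro h x
    have := (hR h).mapL (ContinuousLinearMap.apply ℝ ℝ x)
    simpa using this
  -- Banach–Steinhaus: pointwise convergent sequences of functionals are norm-bounded
  have hBS : ∀ u : ℕ → StrongDual ℝ X, (∀ x, ∃ l, Tendsto (fun m => u m x) atTop (𝓝 l)) →
      ∃ C, 0 ≤ C ∧ ∀ m, ‖u m‖ ≤ C := by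
    intro u hu
    obtain ⟨C, hC⟩ := banach_steinhaus (g := u) (fun x => by
      obtain ⟨l, hl⟩ := hu x
      obtain ⟨C, hC⟩ := hl.norm.bddAbove_range
      exact ⟨C, fun m => hC (Set.mem_range_self m)⟩)
    exact ⟨max C 0, le_max_right _ _, fun m => (hC m).trans (le_max_left _ _)⟩
  -- The key step: `wsclOne` commutes with the image under `R` on the sets `N_(δ)`, `δ < β`.
  have key : ∀ δ < β, wsclOne (⇑R '' wscl (N : Set (StrongDual ℝ X)) δ)
      = ⇑R '' wsclOne (wscl (N : Set (StrongDual ℝ X)) δ) := by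
    intro δ hδ
    apply Set.Subset.antisymm
    · rintro z ⟨u, hu, hconv⟩
      choose h hmem hRh using hu
      obtain ⟨C, hC0, hC⟩ := hBS u (fun x => ⟨z x, hconv x⟩)
      have hconv' : ∀ x, Tendsto (fun m => R (h m) x) atTop (𝓝 (z x)) := by
        intro x
        have := hconv x
        simp only [← hRh] at this
        exact this
      have hhC : ∀ m, ‖h m‖ ≤ 2 * C := fun m => by
        have := hnorm (h m)
        rw [hRh m] at this
        nlinarith [hC m]
      have h2C0 : (0:ℝ) ≤ 2 * C := by linarith
      have hgC : ∀ m, (fun n => g n (h m)) ∈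
          Set.pi Set.univ (fun _ : ℕ => Set.Icc (-(M * (2*C))) (M * (2*C))) := by
        intro m n _
        rw [Set.mem_Icc, ← abs_le]
        calc |g n (h m)| = ‖g n (h m)‖ := (Real.norm_eq_abs _).symm
          _ ≤ ‖g n‖ * ‖h m‖ := (g n).le_opNorm _
          _ ≤ M * (2*C) := mul_le_mul (hgM n) (hhC m) (norm_nonneg _) hM0
      obtain ⟨a, haS, φ, hφ, hφa⟩ :=
        (isCompact_univ_pi (fun _ : ℕ => isCompact_Icc)).tendsto_subseq
          (x := fun m => fun n => g n (h m)) hgC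
      have ha : ∀ n, Tendsto (fun m => g n (h (φ m))) atTop (𝓝 (a n)) := by
        intro n
        exact (tendsto_pi_nhds.mp hφa) n
      have haB : ∀ n, |a n| ≤ M * (2*C) := fun n => by
        have := haS n (Set.mem_univ n)
        rw [Set.mem_Icc] at this
        exact abs_le.mpr this
      have hsumW : Summable (fun n => (ν n * a n) • s n) := by
        refine Summable.of_norm_bounded (hνsum.mul_right (M * (2*C))) fun n => ?_
        rw [norm_smul]
        have h1 : ‖ν n * a n‖ ≤ ν n * (M * (2*C)) := by
          rw [Real.norm_eq_abs, abs_mul, abs_of_pos (hν n)]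
          exact mul_le_mul_of_nonneg_left (haB n) (hν n).le
        calc ‖ν n * a n‖ * ‖s n‖ ≤ ‖ν n * a n‖ * 1 :=
              mul_le_mul_of_nonneg_left (hs n) (norm_nonneg _)
          _ = ‖ν n * a n‖ := mul_one _
          _ ≤ ν n * (M * (2*C)) := h1
      set w : StrongDual ℝ X := ∑' n, (ν n * a n) • s n with hwdef
      set h0 : StrongDual ℝ X := z - w with hh0def
      have hwx : ∀ x, HasSum (fun n => (ν n * a n) * s n x) (w x) := by
        intro x
        have := hsumW.hasSum.mapL (ContinuousLinearMap.apply ℝ ℝ x)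
        simpa using this
      have hptw : ∀ x, Tendsto (fun m => h (φ m) x) atTop (𝓝 (h0 x)) := by
        intro x
        have h1 : Tendsto (fun m => R (h (φ m)) x) atTop (𝓝 (z x)) :=
          (hconv' x).comp hφ.tendsto_atTop
        have h2 : Tendsto (fun m => ∑' n, (ν n * g n (h (φ m))) * s n x) atTop
            (𝓝 (∑' n, (ν n * a n) * s n x)) := by
          refine tendsto_tsum_of_dominated_convergence
            (bound := fun n => ν n * (M * (2*C) * ‖x‖))
            ((hνsum.mul_right _)) (fun n => ?_) ?_
          · exact ((ha n).const_mul (ν n)).mul_const (s n x)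
          · exact Eventually.of_forall fun m n => by
              simpa only [Real.norm_eq_abs] using habs (h (φ m)) (2*C) (hhC (φ m)) n x
        have h3 := h1.sub h2
        have heq : (fun m => R (h (φ m)) x - ∑' n, (ν n * g n (h (φ m))) * s n x)
            = fun m => h (φ m) x := by
          funext m
          have := (hRx (h (φ m)) x).tsum_eq
          rw [this]
          ring
        rw [heq] at h3
        have hw : (∑' n, (ν n * a n) * s n x) = w x := (hwx x).tsum_eq
        rw [hw] at h3
        simpa [hh0def] using h3
      have hgh0 : ∀ n, a n = g n h0 := fun n =>
        tendsto_nhds_unique (ha n)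
          (hcont δ hδ (fun m => h (φ m)) (fun m => hmem (φ m)) h0 hptw n)
      have hw' : R h0 - h0 = w := by
        rw [← (hR h0).tsum_eq, hwdef]
        congr 1
        funext n
        rw [← hgh0 n]
      have hz : R h0 = z := by
        have h4 : R h0 = w + h0 := by
          rw [← hw']; abel
        rw [h4, hh0def]; abel
      exact ⟨h0, ⟨fun m => h (φ m), fun m => hmem (φ m), hptw⟩, hz⟩
    · rintro _ ⟨x0, ⟨xs, hxs, hconv⟩, rfl⟩
      refine ⟨fun m => R (xs m), fun m => ⟨xs m, hxs m, rfl⟩, ?_⟩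
      intro x
      obtain ⟨C, hC0, hC⟩ := hBS xs (fun y => ⟨x0 y, hconv y⟩)
      have hx0C : ‖x0‖ ≤ C := by
        refine ContinuousLinearMap.opNorm_le_bound _ hC0 fun y => ?_
        refine le_of_tendsto (hconv y).norm (Eventually.of_forall fun m => ?_)
        calc ‖xs m y‖ ≤ ‖xs m‖ * ‖y‖ := (xs m).le_opNorm y
          _ ≤ C * ‖y‖ := mul_le_mul_of_nonneg_right (hC m) (norm_nonneg y)
      have h2 : Tendsto (fun m => ∑' n, (ν n * g n (xs m)) * s n x) atTop
          (𝓝 (∑' n, (ν n * g n x0) * s n x)) := by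
        refine tendsto_tsum_of_dominated_convergence
          (bound := fun n => ν n * (M * C * ‖x‖)) (hνsum.mul_right _) (fun n => ?_) ?_
        · exact ((hcont δ hδ xs hxs x0 hconv n).const_mul (ν n)).mul_const (s n x)
        · exact Eventually.of_forall fun m n => by
            simpa only [Real.norm_eq_abs] using habs (xs m) C (hC m) n x
      have h3 := h2.add (hconv x)
      have heq : (fun m => (∑' n, (ν n * g n (xs m)) * s n x) + xs m x)
          = fun m => R (xs m) x := by
        funext m
        rw [(hRx (xs m) x).tsum_eq]
        ring
      rw [heq] at h3
      rw [(hRx x0 x).tsum_eq] at h3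
      have : R x0 x - x0 x + x0 x = R x0 x := by ring
      rwa [this] at h3
  -- transfinite induction
  intro γ
  induction γ using Ordinal.induction with
  | h γ IH =>
    intro hγβ
    rcases eq_or_ne γ 0 with rfl | hγ0
    · rw [wscl_zero, wscl_zero]
    · rw [wscl_ne_zero _ hγ0, wscl_ne_zero _ hγ0, Set.image_iUnion]
      refine Set.iUnion_congr fun δ => ?_
      rw [Set.image_iUnion]
      refine Set.iUnion_congr fun hδγ => ?_
      rw [IH δ hδγ (hδγ.le.trans hγβ), key δ (lt_of_lt_of_le hδγ hγβ)]

end
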